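/- If a pattern P without empty rows or columns has an m₀×n₀ witness, then P has an m₀×n₀ explicit witness (a matrix saturated for P that has an expandable row and an expandable column). -/

import Mathlib

/-- A 0-1 matrix `M` contains a pattern `P` if there are strictly increasing row and
column index maps embedding the 1-entries of `P` into 1-entries of `M`. -/
def Contains {m n k l : ℕ} (M : Fin m → Fin n → Bool) (P : Fin k → Fin l → Bool) : Prop :=
  ∃ r : Fin k → Fin m, ∃ c : Fin l → Fin n, StrictMono r ∧ StrictMono c ∧
    ∀ i j, P i j = true → M (r i) (c j) = true

def Avoids {m n k l : ℕ} (M : Fin m → Fin n → Bool) (P : Fin k → Fin l → Bool) : Prop :=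
  ¬ Contains M P

/-- The matrix obtained from `M` by changing the entry at `(i, j)` to 1. -/
def SetOne {m n : ℕ} (M : Fin m → Fin n → Bool) (i : Fin m) (j : Fin n) :
    Fin m → Fin n → Bool :=
  fun i' j' => if i' = i ∧ j' = j then true else M i' j'

def ExpandableRow {m n k l : ℕ} (M : Fin m → Fin n → Bool) (P : Fin k → Fin l → Bool)
    (i : Fin m) : Prop :=
  (∀ j, M i j = false) ∧ ∀ j, Contains (SetOne M i j) P

def ExpandableCol {m n k l : ℕ} (M : Fin m → Fin n → Bool) (P : Fin k → Fin l → Bool)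
    (j : Fin n) : Prop :=
  (∀ i, M i j = false) ∧ ∀ i, Contains (SetOne M i j) P

def Saturated {m n k l : ℕ} (M : Fin m → Fin n → Bool) (P : Fin k → Fin l → Bool) : Prop :=
  Avoids M P ∧ ∀ i j, M i j = false → Contains (SetOne M i j) P

def IsWitness {m n k l : ℕ} (M : Fin m → Fin n → Bool) (P : Fin k → Fin l → Bool) : Prop :=
  Avoids M P ∧ (∃ i, ExpandableRow M P i) ∧ (∃ j, ExpandableCol M P j)

def HorizontalWitness {m n k l : ℕ} (M : Fin m → Fin n → Bool)
    (P : Fin k → Fin l → Bool) : Prop :=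
  Avoids M P ∧ ∃ j, ExpandableCol M P j

def VerticalWitness {m n k l : ℕ} (M : Fin m → Fin n → Bool)
    (P : Fin k → Fin l → Bool) : Prop :=
  Avoids M P ∧ ∃ i, ExpandableRow M P i

/-- `P` is once-separable: block form `((A,0),(0,B))` or `((0,A),(B,0))` with `A`, `B` nonzero. -/
def OnceSeparable {k l : ℕ} (P : Fin k → Fin l → Bool) : Prop :=
  ∃ a b : ℕ, a ≤ k ∧ b ≤ l ∧
    (((∀ i j, P i j = true → ((i.val < a ∧ j.val < b) ∨ (a ≤ i.val ∧ b ≤ j.val))) ∧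
      (∃ i j, i.val < a ∧ j.val < b ∧ P i j = true) ∧
      (∃ i j, a ≤ i.val ∧ b ≤ j.val ∧ P i j = true)) ∨
     ((∀ i j, P i j = true → ((i.val < a ∧ b ≤ j.val) ∨ (a ≤ i.val ∧ j.val < b))) ∧
      (∃ i j, i.val < a ∧ b ≤ j.val ∧ P i j = true) ∧
      (∃ i j, a ≤ i.val ∧ j.val < b ∧ P i j = true)))

def NoEmptyRowCol {k l : ℕ} (P : Fin k → Fin l → Bool) : Prop :=
  (∀ i, ∃ j, P i j = true) ∧ (∀ j, ∃ i, P i j = true)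

def IsPermMatrix {k : ℕ} (P : Fin k → Fin k → Bool) : Prop :=
  (∀ i, ∃! j, P i j = true) ∧ (∀ j, ∃! i, P i j = true)

/-- `P` is non-trivial: it has a row whose only 1-entry is leftmost, a row whose only
1-entry is rightmost, a column whose only 1-entry is topmost, and a column whose only
1-entry is bottommost. -/
def NonTrivial {k l : ℕ} (P : Fin k → Fin l → Bool) : Prop :=
  (∃ i, ∀ j, (P i j = true ↔ j.val = 0)) ∧
  (∃ i, ∀ j, (P i j = true ↔ j.val = l - 1)) ∧
  (∃ j, ∀ i, (P i j = true ↔ i.val = 0)) ∧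
  (∃ j, ∀ i, (P i j = true ↔ i.val = k - 1))

/-- The two-copy witness construction `W(P)` (0-based indices; `s < t` are the 0-based
rows of the leftmost and rightmost 1-entries of `P`). -/
def WP {k : ℕ} (P : Fin k → Fin k → Bool) (s t : ℕ) :
    Fin (k + (t - s)) → Fin (2 * k - 2) → Bool :=
  fun i j =>
    if h : j.val < k - 1 ∧ i.val < k then P ⟨i.val, h.2⟩ ⟨j.val, by omega⟩
    else if h2 : k - 1 ≤ j.val ∧ t - s ≤ i.val ∧ i.val - (t - s) < k ∧ j.val - (k - 2) < k then
      P ⟨i.val - (t - s), h2.2.2.1⟩ ⟨j.val - (k - 2), h2.2.2.2⟩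
    else false

lemma contains_mono {m n k l : ℕ} {M M' : Fin m → Fin n → Bool} {P : Fin k → Fin l → Bool}
    (h : ∀ i j, M i j = true → M' i j = true) (hc : Contains M P) : Contains M' P := by
  obtain ⟨r, c, hr, hcm, hent⟩ := hc
  exact ⟨r, c, hr, hcm, fun i j hp => h _ _ (hent i j hp)⟩

lemma setOne_mono {m n : ℕ} {M M' : Fin m → Fin n → Bool} (i : Fin m) (j : Fin n)
    (h : ∀ i' j', M i' j' = true → M' i' j' = true) :
    ∀ i' j', SetOne M i j i' j' = true → SetOne M' i j i' j' = true := by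
  intro i' j'
  unfold SetOne
  split
  · exact fun h' => h'
  · exact h i' j'

noncomputable def wt {m n : ℕ} (M : Fin m → Fin n → Bool) : ℕ :=
  (Finset.univ.filter fun p : Fin m × Fin n => M p.1 p.2 = true).card

lemma wt_lt {m n : ℕ} (M : Fin m → Fin n → Bool) (i : Fin m) (j : Fin n)
    (h : M i j = false) : wt M < wt (SetOne M i j) := by
  classical
  apply Finset.card_lt_card
  constructor
  · intro p hp
    simp only [Finset.mem_filter, Finset.mem_univ, true_and] at hp ⊢
    unfold SetOne
    split
    · rfl
    · exact hp
  · intro hsub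
    have := hsub (by
      simp only [Finset.mem_filter, Finset.mem_univ, true_and]
      show SetOne M i j i j = true
      unfold SetOne
      simp : (i, j) ∈ Finset.univ.filter fun p : Fin m × Fin n => SetOne M i j p.1 p.2 = true)
    simp only [Finset.mem_filter, Finset.mem_univ, true_and] at this
    rw [h] at this
    exact Bool.false_ne_true this

theorem stmt4 {k l m0 n0 : ℕ} (P : Fin k → Fin l → Bool) (hP : NoEmptyRowCol P)
    (M : Fin m0 → Fin n0 → Bool) (hM : IsWitness M P) :
    ∃ M' : Fin m0 → Fin n0 → Bool, Saturated M' P ∧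
      (∃ i, ExpandableRow M' P i) ∧ (∃ j, ExpandableCol M' P j) := by
  classical
  obtain ⟨hAv, ⟨i₀, hrow0, hrow1⟩, ⟨j₀, hcol0, hcol1⟩⟩ := hM
  set S : Set (Fin m0 → Fin n0 → Bool) :=
    {N | Avoids N P ∧ (∀ i j, M i j = true → N i j = true) ∧
      (∀ j, N i₀ j = false) ∧ (∀ i, N i j₀ = false)} with hS
  have hMS : M ∈ S := ⟨hAv, fun _ _ h => h, hrow0, hcol0⟩
  obtain ⟨M', hM'S, hmax⟩ :=
    Set.Finite.exists_maximalFor wt S (Set.toFinite S) ⟨M, hMS⟩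
  obtain ⟨hAv', hge, hr0, hc0⟩ := hM'S
  refine ⟨M', ⟨hAv', ?_⟩, ⟨i₀, hr0, ?_⟩, ⟨j₀, hc0, ?_⟩⟩
  · intro i j hij
    by_cases hi : i = i₀
    · subst hi
      exact contains_mono (setOne_mono i j hge) (hrow1 j)
    by_cases hj : j = j₀
    · subst hj
      exact contains_mono (setOne_mono i j hge) (hcol1 i)
    by_contra hcon
    have hNS : SetOne M' i j ∈ S := by
      refine ⟨hcon, fun i' j' h => ?_, ?_, ?_⟩
      · show SetOne M' i j i' j' = true
        unfold SetOne; split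
        · rfl
        · exact hge i' j' h
      · intro j'
        show SetOne M' i j i₀ j' = false
        unfold SetOne
        rw [if_neg (fun h => hi h.1.symm)]
        exact hr0 j'
      · intro i'
        show SetOne M' i j i' j₀ = false
        unfold SetOne
        rw [if_neg (fun h => hj h.2.symm)]
        exact hc0 i'
    have hlt := wt_lt M' i j hij
    have := hmax hNS (le_of_lt hlt)
    omega
  · intro j
    exact contains_mono (setOne_mono i₀ j hge) (hrow1 j)
  · intro i
    exact contains_mono (setOne_mono i j₀ hge) (hcol1 i)
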